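/- Let α ∈ [0,1], λ > 0, ω > 0, and let T be the 2×2 matrix with both rows equal to (1−α, α) and p⁰ = (1/2, 1/2). Set γ̃ = (2α − 1) / (λ · (4α² − 4α + 2ω + 1)). Then for every N ≥ 1 the vector h = (−γ̃, γ̃) satisfies the stationarity equation λ · [ Σ_{t=0}^{N−1} (p⁰(Tᵗ⁺¹ − Tᵗ) · h) · p⁰(Tᵗ⁺¹ − Tᵗ) + ω h ] = p⁰ Tᴺ − p⁰, and hence is the unique global maximizer of the trajectory-regularized objective L[h] = (1/N)Σ_{t=0}^{N−1}(p⁰Tᵗ·((T−I)h)) − (λ/(2N))Σ_{t=0}^{N−1}(p⁰Tᵗ·((T−I)h))² − (λω/(2N))‖h‖². -/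

import Mathlib

open Finset Matrix

set_option maxHeartbeats 1000000 in
/-- Two-state chain with rows `(1−α, α)` and `p⁰ = (1/2, 1/2)`: for every `N ≥ 1` the
vector `h = (−γ̃, γ̃)` with `γ̃ = (2α−1)/(λ(4α²−4α+2ω+1))` satisfies the stationarity
equation of the trajectory-regularized objective, and hence is its unique global
maximizer. -/
theorem stmt_9 (α : ℝ) (hα : α ∈ Set.Icc (0 : ℝ) 1)
    (lam ω : ℝ) (hlam : 0 < lam) (hω : 0 < ω)
    (T : Matrix (Fin 2) (Fin 2) ℝ) (hT : T = !![1 - α, α; 1 - α, α])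
    (p0 : Fin 2 → ℝ) (hp0 : p0 = ![1 / 2, 1 / 2])
    (γt : ℝ) (hγt : γt = (2 * α - 1) / (lam * (4 * α ^ 2 - 4 * α + 2 * ω + 1)))
    (h : Fin 2 → ℝ) (hh : h = ![-γt, γt]) :
    ∀ N : ℕ, 1 ≤ N →
      (lam • (∑ t ∈ Finset.range N,
              (((p0 ᵥ* T ^ (t + 1) - p0 ᵥ* T ^ t) ⬝ᵥ h) •
                (p0 ᵥ* T ^ (t + 1) - p0 ᵥ* T ^ t))
            + ω • h)
        = p0 ᵥ* T ^ N - p0) ∧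
      (∀ L : (Fin 2 → ℝ) → ℝ,
        (∀ g : Fin 2 → ℝ,
          L g = (1 / N) * ∑ t ∈ Finset.range N,
                  ((p0 ᵥ* T ^ t) ⬝ᵥ ((T - 1) *ᵥ g))
                - (lam / (2 * N)) * ∑ t ∈ Finset.range N,
                  ((p0 ᵥ* T ^ t) ⬝ᵥ ((T - 1) *ᵥ g)) ^ 2
                - (lam * ω / (2 * N)) * ∑ i, (g i) ^ 2) →
        ∀ g : Fin 2 → ℝ, g ≠ h → L g < L h) := by
  have hDpos : 0 < lam * (4 * α ^ 2 - 4 * α + 2 * ω + 1) := by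
    have : 0 < 4 * α ^ 2 - 4 * α + 2 * ω + 1 := by nlinarith [sq_nonneg (2 * α - 1)]
    positivity
  have hH : lam * (4 * α ^ 2 - 4 * α + 2 * ω + 1) * γt = 2 * α - 1 := by
    rw [hγt, mul_div_assoc', mul_div_right_comm, div_self hDpos.ne', one_mul]
  -- fixed row vector
  have hfix : (![1 - α, α] : Fin 2 → ℝ) ᵥ* T = ![1 - α, α] := by
    subst hT
    funext i
    fin_cases i <;>
      simp [Matrix.vecMul, dotProduct, Fin.sum_univ_two] <;> ring
  have h1 : p0 ᵥ* T = ![1 - α, α] := by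
    subst hT hp0
    funext i
    fin_cases i <;>
      simp [Matrix.vecMul, dotProduct, Fin.sum_univ_two] <;> ring
  have hstat : ∀ t : ℕ, p0 ᵥ* T ^ (t + 1) = ![1 - α, α] := by
    intro t
    induction t with
    | zero => simpa using h1
    | succ n ih =>
        rw [pow_succ, ← Matrix.vecMul_vecMul, ih, hfix]
  -- zero-dot lemma for t ≥ 1
  have hz : ∀ g : Fin 2 → ℝ, (![1 - α, α] : Fin 2 → ℝ) ⬝ᵥ ((T - 1) *ᵥ g) = 0 := by
    intro g
    subst hT
    simp [Matrix.mulVec, dotProduct, Fin.sum_univ_two, Matrix.sub_apply,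
      Matrix.one_apply]
    ring
  have ha : ∀ g : Fin 2 → ℝ, p0 ⬝ᵥ ((T - 1) *ᵥ g) = (2 * α - 1) * (g 1 - g 0) / 2 := by
    intro g
    subst hT hp0
    simp [Matrix.mulVec, dotProduct, Fin.sum_univ_two, Matrix.sub_apply,
      Matrix.one_apply]
    ring
  intro N hN
  have hN0 : ((N : ℝ)) ≠ 0 := by positivity
  have hNpos : (0 : ℝ) < (N : ℝ) := by positivity
  constructor
  · -- stationarity equation
    have hsum : ∑ t ∈ Finset.range N,
        (((p0 ᵥ* T ^ (t + 1) - p0 ᵥ* T ^ t) ⬝ᵥ h) •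
          (p0 ᵥ* T ^ (t + 1) - p0 ᵥ* T ^ t))
        = ((p0 ᵥ* T ^ 1 - p0 ᵥ* T ^ 0) ⬝ᵥ h) • (p0 ᵥ* T ^ 1 - p0 ᵥ* T ^ 0) := by
      apply Finset.sum_eq_single_of_mem 0 (Finset.mem_range.mpr hN)
      intro b _ hb
      obtain ⟨s, rfl⟩ := Nat.exists_eq_succ_of_ne_zero hb
      rw [hstat (s + 1), hstat s]
      simp
    rw [hsum]
    obtain ⟨M, rfl⟩ : ∃ M, N = M + 1 := ⟨N - 1, (Nat.succ_pred_eq_of_pos hN).symm⟩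
    rw [hstat M, pow_one, pow_zero, Matrix.vecMul_one, h1]
    subst hh hp0
    funext i
    fin_cases i
    · simp [dotProduct, Fin.sum_univ_two]
      linear_combination (-1 / 2 : ℝ) * hH
    · simp [dotProduct, Fin.sum_univ_two]
      linear_combination (1 / 2 : ℝ) * hH
  · -- unique maximizer
    intro L hL g hg
    have S1 : ∀ g : Fin 2 → ℝ,
        ∑ t ∈ Finset.range N, ((p0 ᵥ* T ^ t) ⬝ᵥ ((T - 1) *ᵥ g))
          = (2 * α - 1) * (g 1 - g 0) / 2 := by
      intro g
      rw [Finset.sum_eq_single_of_mem 0 (Finset.mem_range.mpr hN)]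
      · rw [pow_zero, Matrix.vecMul_one]; exact ha g
      · intro b _ hb
        obtain ⟨s, rfl⟩ := Nat.exists_eq_succ_of_ne_zero hb
        rw [hstat s]; exact hz g
    have S2 : ∀ g : Fin 2 → ℝ,
        ∑ t ∈ Finset.range N, ((p0 ᵥ* T ^ t) ⬝ᵥ ((T - 1) *ᵥ g)) ^ 2
          = ((2 * α - 1) * (g 1 - g 0) / 2) ^ 2 := by
      intro g
      rw [Finset.sum_eq_single_of_mem 0 (Finset.mem_range.mpr hN)]
      · rw [pow_zero, Matrix.vecMul_one, ha g]
      · intro b _ hb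
        obtain ⟨s, rfl⟩ := Nat.exists_eq_succ_of_ne_zero hb
        rw [hstat s, hz g]
        ring
    have hLform : ∀ g : Fin 2 → ℝ,
        L g = (1 / N) * ((2 * α - 1) * (g 1 - g 0) / 2)
            - (lam / (2 * N)) * ((2 * α - 1) * (g 1 - g 0) / 2) ^ 2
            - (lam * ω / (2 * N)) * (g 0 ^ 2 + g 1 ^ 2) := by
      intro g
      rw [hL g, S1 g, S2 g, Fin.sum_univ_two]
    rw [← sub_pos]
    set x := g 0 with hx
    set y := g 1 with hy
    have hh0 : h 0 = -γt := by rw [hh]; rfl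
    have hh1 : h 1 = γt := by rw [hh]; rfl
    have key : L h - L g
        = (1 / N) * ((lam * (2 * α - 1) ^ 2 / 8 + lam * ω / 4) * (y - x - 2 * γt) ^ 2
            + (lam * ω / 4) * (x + y) ^ 2) := by
      rw [hLform h, hLform g, hh0, hh1]
      linear_combination ((N : ℝ))⁻¹ * ((y - x) / 2 - γt) * hH
    rw [key]
    have hq : 0 < (lam * (2 * α - 1) ^ 2 / 8 + lam * ω / 4) * (y - x - 2 * γt) ^ 2
        + (lam * ω / 4) * (x + y) ^ 2 := by
      have hne : x ≠ -γt ∨ y ≠ γt := by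
        by_contra hc
        push_neg at hc
        apply hg
        funext i
        fin_cases i
        · show g 0 = h 0
          rw [hh0, ← hx, hc.1]
        · show g 1 = h 1
          rw [hh1, ← hy, hc.2]
      have hlo : 0 < lam * ω := mul_pos hlam hω
      rcases hne with hne | hne
      · have hxp : 0 < (x + γt) ^ 2 := by
          have : x + γt ≠ 0 := fun hc => hne (by linarith [hc])
          positivity
        have h2 : 2 * (x + γt) ^ 2 ≤ (y - x - 2 * γt) ^ 2 + (x + y) ^ 2 := by
          nlinarith [sq_nonneg (y - x - 2 * γt + (x + y))]
        have hC2 : 0 < lam * ω / 4 := by positivity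
        have h3 : (lam * ω / 4) * (2 * (x + γt) ^ 2)
            ≤ (lam * ω / 4) * ((y - x - 2 * γt) ^ 2 + (x + y) ^ 2) :=
          mul_le_mul_of_nonneg_left h2 hC2.le
        have h4 : 0 < (lam * ω / 4) * (2 * (x + γt) ^ 2) := by positivity
        have h5 : 0 ≤ (lam * (2 * α - 1) ^ 2 / 8) * (y - x - 2 * γt) ^ 2 := by positivity
        nlinarith [h3, h4, h5]
      · have hyp : 0 < (y - γt) ^ 2 := by
          have : y - γt ≠ 0 := fun hc => hne (by linarith [hc])
          positivity
        have h2 : 2 * (y - γt) ^ 2 ≤ (y - x - 2 * γt) ^ 2 + (x + y) ^ 2 := by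
          nlinarith [sq_nonneg (x + y - (y - x - 2 * γt))]
        have hC2 : 0 < lam * ω / 4 := by positivity
        have h3 : (lam * ω / 4) * (2 * (y - γt) ^ 2)
            ≤ (lam * ω / 4) * ((y - x - 2 * γt) ^ 2 + (x + y) ^ 2) :=
          mul_le_mul_of_nonneg_left h2 hC2.le
        have h4 : 0 < (lam * ω / 4) * (2 * (y - γt) ^ 2) := by positivity
        have h5 : 0 ≤ (lam * (2 * α - 1) ^ 2 / 8) * (y - x - 2 * γt) ^ 2 := by positivity
        nlinarith [h3, h4, h5]
    exact mul_pos (by positivity) hq
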